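/- Let Q be a nonzero prime ideal of T not containing w, and let P = Q ∩ T*, where T* denotes the image of ℂ[X,Y,Z] in T. Then Q ∩ ι(Q) = P·T, the ideal of T generated by P. -/

import Mathlib

noncomputable section

open MvPolynomial

abbrev R3 : Type := MvPolynomial (Fin 3) ℂ

def chi : R3 :=
  C (484/49) * (C 50000 * (X 1) ^ 6 - C 1000 * (X 0) ^ 2 * X 2 * (X 1) ^ 4
    + (X 0) ^ 5 * (X 1) ^ 4 - C 2 * (X 0) ^ 4 * (X 2) ^ 2 * (X 1) ^ 2
    + C 1800 * X 0 * (X 2) ^ 3 * (X 1) ^ 2 + (X 0) ^ 3 * (X 2) ^ 4 - C 864 * (X 2) ^ 5)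

/-- The relation `W² - χ` inside `ℂ[X, Y, Z, W]`. -/
def relIdeal : Ideal (MvPolynomial (Fin 4) ℂ) :=
  Ideal.span {(X 3) ^ 2 - (rename Fin.castSucc chi)}

/-- `T = ℂ[X, Y, Z, W]/(W² - χ)`. -/
abbrev T : Type := MvPolynomial (Fin 4) ℂ ⧸ relIdeal

def mkT : MvPolynomial (Fin 4) ℂ →ₐ[ℂ] T := Ideal.Quotient.mkₐ ℂ relIdeal

def xT : T := mkT (X 0)
def yT : T := mkT (X 1)
def zT : T := mkT (X 2)
/-- `w`, the class of `W` in `T`. -/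
def wT : T := mkT (X 3)

/-- The canonical map `ℂ[X, Y, Z] → T`. -/
def toT : R3 →ₐ[ℂ] T := mkT.comp (rename Fin.castSucc)

/-- The structure map `ℂ → T`. -/
def CT : ℂ → T := algebraMap ℂ T


lemma toT_X (j : Fin 3) : toT (X j) = mkT (X (Fin.castSucc j)) := by
  simp [toT, rename_X]

lemma wT_sq : wT * wT = toT chi := by
  have : (X 3 : MvPolynomial (Fin 4) ℂ) ^ 2 - rename Fin.castSucc chi ∈ relIdeal :=
    Ideal.subset_span rfl
  have h := (Ideal.Quotient.eq (I := relIdeal)).2 this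
  simpa [wT, toT, mkT, ← sq] using h

lemma exists_rep (t : T) : ∃ a b : R3, t = toT a + toT b * wT := by
  obtain ⟨p, rfl⟩ := Ideal.Quotient.mkₐ_surjective ℂ relIdeal t
  show ∃ a b : R3, mkT p = toT a + toT b * wT
  induction p using MvPolynomial.induction_on with
  | C c => exact ⟨C c, 0, by simp [toT, mkT]⟩
  | add p q hp hq =>
    obtain ⟨a1, b1, h1⟩ := hp
    obtain ⟨a2, b2, h2⟩ := hq
    exact ⟨a1 + a2, b1 + b2, by simp [map_add, h1, h2]; ring⟩
  | mul_X p i hp =>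
    obtain ⟨a, b, h⟩ := hp
    induction i using Fin.lastCases with
    | last =>
      refine ⟨b * chi, a, ?_⟩
      have h3 : mkT (p * X (Fin.last 3)) = mkT p * wT := by
        rw [map_mul]; rfl
      rw [h3, h, map_mul]
      ring_nf
      rw [pow_two, wT_sq]
    | cast j =>
      refine ⟨a * X j, b * X j, ?_⟩
      have h3 : mkT (p * X (Fin.castSucc j)) = mkT p * toT (X j) := by
        rw [toT_X, map_mul]
      rw [h3, h, map_mul, map_mul]
      ring


set_option maxHeartbeats 1000000 in
/-- If `Q` is a nonzero prime ideal of `T = ℂ[X, Y, Z, W]/(W² - χ)` not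
containing `w`, and `P = Q ∩ T*` where `T*` is the image of `ℂ[X, Y, Z]` in `T`, then
`Q ∩ ι(Q) = P·T`. -/
theorem inf_involution_eq_span_inter
    (ι : T →ₐ[ℂ] T) (hx : ι xT = xT) (hy : ι yT = yT) (hz : ι zT = zT) (hw : ι wT = -wT)
    (Q : Ideal T) (hQ : Q.IsPrime) (hQ0 : Q ≠ ⊥) (hwQ : wT ∉ Q) :
    Q ⊓ Q.map ι.toRingHom = Ideal.span ((Q : Set T) ∩ Set.range ⇑toT) := by
  have hfix : ∀ p : R3, ι (toT p) = toT p := by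
    have heq : ι.comp toT = toT := by
      apply MvPolynomial.algHom_ext
      intro i
      fin_cases i
      · simpa [toT_X, xT] using hx
      · simpa [toT_X, yT] using hy
      · simpa [toT_X, zT] using hz
    intro p; exact AlgHom.congr_fun heq p
  have hinv : ∀ t : T, ι (ι t) = t := by
    intro t
    obtain ⟨a, b, rfl⟩ := exists_rep t
    simp [map_add, map_mul, hfix, hw]
  have hmap : ∀ t : T, t ∈ Q.map ι.toRingHom ↔ ι t ∈ Q := by
    intro t
    constructor
    · intro ht
      have hle : Q.map ι.toRingHom ≤ Q.comap ι.toRingHom := by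
        rw [Ideal.map_le_iff_le_comap]
        intro s hs
        simp only [Ideal.mem_comap, AlgHom.toRingHom_eq_coe, RingHom.coe_coe]
        simpa [hinv] using hs
      exact hle ht
    · intro ht
      have := Ideal.mem_map_of_mem ι.toRingHom ht
      simpa [hinv] using this
  -- half
  set u : T := algebraMap ℂ T (1/2) with hu_def
  have hu : ∀ x : T, u * (x + x) = x := by
    intro x
    have h2 : u + u = 1 := by rw [hu_def, ← map_add]; norm_num
    calc u * (x + x) = (u + u) * x := by ring
    _ = x := by rw [h2, one_mul]
  apply le_antisymm
  · intro t ht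
    obtain ⟨htQ, htι⟩ := ht
    have hιt : ι t ∈ Q := (hmap t).1 htι
    obtain ⟨a, b, rfl⟩ := exists_rep t
    have hιform : ι (toT a + toT b * wT) = toT a - toT b * wT := by
      simp [map_add, map_mul, hfix, hw]; ring
    have ha : toT a ∈ Q := by
      have h2 : u * ((toT a + toT b * wT) + ι (toT a + toT b * wT)) ∈ Q :=
        Ideal.mul_mem_left _ _ (Q.add_mem htQ hιt)
      rw [hιform] at h2
      have heq : u * ((toT a + toT b * wT) + (toT a - toT b * wT)) = toT a := by
        have := hu (toT a); calc u * ((toT a + toT b * wT) + (toT a - toT b * wT))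
            = u * (toT a + toT a) := by ring
          _ = toT a := hu _
      rwa [heq] at h2
    have hbw : toT b * wT ∈ Q := by
      have h2 : u * ((toT a + toT b * wT) - ι (toT a + toT b * wT)) ∈ Q :=
        Ideal.mul_mem_left _ _ (Q.sub_mem htQ hιt)
      rw [hιform] at h2
      have heq : u * ((toT a + toT b * wT) - (toT a - toT b * wT)) = toT b * wT := by
        calc u * ((toT a + toT b * wT) - (toT a - toT b * wT))
            = u * (toT b * wT + toT b * wT) := by ring
          _ = toT b * wT := hu _
      rwa [heq] at h2
    have hb : toT b ∈ Q := by
      rcases hQ.mem_or_mem hbw with h | h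
      · exact h
      · exact absurd h hwQ
    have haS : toT a ∈ Ideal.span ((Q : Set T) ∩ Set.range ⇑toT) :=
      Ideal.subset_span ⟨ha, ⟨a, rfl⟩⟩
    have hbS : toT b ∈ Ideal.span ((Q : Set T) ∩ Set.range ⇑toT) :=
      Ideal.subset_span ⟨hb, ⟨b, rfl⟩⟩
    exact Ideal.add_mem _ haS (Ideal.mul_mem_right _ _ hbS)
  · rw [Ideal.span_le]
    rintro t ⟨htQ, p, rfl⟩
    exact ⟨htQ, (hmap _).2 (by rwa [hfix])⟩
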